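/- Let c > 1 and ν > 0, and let g_{c,ν} be the inner product on 𝔤_c whose matrix in the basis e₀, e₁, e₂ is [[1, 1, 0], [1, c, 0], [0, 0, ν]]. Then (𝔤_c, g_{c,ν}) is Einstein with Ric = −(2/ν)·g_{c,ν}, and moreover its curvature tensor satisfies R(X,Y)Z = −(1/ν)·(g_{c,ν}(Y,Z)·X − g_{c,ν}(X,Z)·Y) for all X, Y, Z; that is, the corresponding left-invariant metric has constant sectional curvature −1/ν (so (G_c, g_{c,ν}) is isometric to real hyperbolic 3-space and its isometry group is SO(3,1)). -/

import Mathlib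

noncomputable section

open scoped BigOperators

/-- The underlying space of the 3-dimensional Lie algebras under consideration. -/
abbrev V3 : Type := Fin 3 → ℝ

/-- The standard basis `e₀, e₁, e₂`. -/
def e3 (i : Fin 3) : V3 := Pi.single i 1

/-- The bracket of the Lie algebra `𝔤_c`:
`[e₀,e₁] = 0`, `[e₂,e₀] = e₁`, `[e₂,e₁] = −c e₀ + 2 e₁`, extended bilinearly. -/
def braC (c : ℝ) (x y : V3) : V3 :=
  ![-c * (x 2 * y 1 - y 2 * x 1),
    (x 2 * y 0 - y 2 * x 0) + 2 * (x 2 * y 1 - y 2 * x 1),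
    0]

/-- The inner product `g_{c,ν}` on `𝔤_c`, `c > 1`, with matrix
`[[1,1,0],[1,c,0],[0,0,ν]]` in the basis `e₀,e₁,e₂`. -/
def gE (c ν : ℝ) (x y : V3) : ℝ :=
  x 0 * y 0 + (x 0 * y 1 + x 1 * y 0) + c * (x 1 * y 1) + ν * (x 2 * y 2)

/-- The curvature tensor `R(X,Y)Z = ∇_X ∇_Y Z − ∇_Y ∇_X Z − ∇_{[X,Y]} Z`. -/
def Rc (br nab : V3 → V3 → V3) (X Y Z : V3) : V3 :=
  nab X (nab Y Z) - nab Y (nab X Z) - nab (br X Y) Z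

/-- The Ricci form `Ric(X,Y) = tr (Z ↦ R(Z,X)Y)`. -/
def RicF (br nab : V3 → V3 → V3) (X Y : V3) : ℝ :=
  ∑ k : Fin 3, Rc br nab (e3 k) X Y k


/-- Explicit Levi-Civita product of `(𝔤_c, g_{c,ν})`. -/
def NLC (c ν : ℝ) (x y : V3) : V3 :=
  ![-(x 0 * y 2) - x 2 * y 0 - c * (x 2 * y 1),
    -(x 1 * y 2) + x 2 * y 0 + x 2 * y 1,
    (x 0 * y 0 + x 0 * y 1 + x 1 * y 0 + c * (x 1 * y 1)) / ν]

/-- for `c > 1` and `ν > 0`, `(𝔤_c, g_{c,ν})` is Einstein with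
`Ric = −(2/ν) g_{c,ν}`, and its curvature tensor satisfies
`R(X,Y)Z = −(1/ν)(g(Y,Z) X − g(X,Z) Y)`, i.e. the left-invariant metric has
constant sectional curvature `−1/ν`. -/
theorem stmt13 (c ν : ℝ) (hc : 1 < c) (hν : 0 < ν) (nab : V3 → V3 → V3)
    (hK : ∀ X Y Z : V3, 2 * gE c ν (nab X Y) Z =
      gE c ν (braC c X Y) Z - gE c ν (braC c Y Z) X + gE c ν (braC c Z X) Y) :
    (∀ X Y : V3, RicF (braC c) nab X Y = -(2/ν) * gE c ν X Y) ∧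
    (∀ X Y Z : V3,
      Rc (braC c) nab X Y Z = -(1/ν) • (gE c ν Y Z • X - gE c ν X Z • Y)) := by
  have hc1 : (0:ℝ) < c - 1 := by linarith
  have hν' : ν ≠ 0 := ne_of_gt hν
  have he0 : e3 0 = ![1,0,0] := by funext j; fin_cases j <;> simp [e3, Pi.single_apply]
  have he1 : e3 1 = ![0,1,0] := by funext j; fin_cases j <;> simp [e3, Pi.single_apply]
  have he2 : e3 2 = ![0,0,1] := by funext j; fin_cases j <;> simp [e3, Pi.single_apply]
  have hfin : ∀ (W : V3), W ⟨2, by omega⟩ = W 2 := fun _ => rfl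
  have hE : ∀ x y : V3, nab x y = NLC c ν x y := by
    intro x y
    have h0 := hK x y (e3 0)
    have h1 := hK x y (e3 1)
    have h2 := hK x y (e3 2)
    simp only [he0, he1, he2, gE, braC, Matrix.cons_val_zero, Matrix.cons_val_one,
      Matrix.head_cons, Matrix.cons_val_two, Matrix.tail_cons] at h0 h1 h2
    funext i
    fin_cases i
    · show nab x y 0 = NLC c ν x y 0
      simp only [NLC, Matrix.cons_val_zero]
      refine mul_left_cancel₀ (a := 2 * (c - 1)) (by positivity) ?_
      linear_combination c * h0 - h1
    · show nab x y 1 = NLC c ν x y 1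
      simp only [NLC, Matrix.cons_val_one, Matrix.head_cons, Matrix.cons_val_zero]
      refine mul_left_cancel₀ (a := 2 * (c - 1)) (by positivity) ?_
      linear_combination h1 - h0
    · show nab x y 2 = NLC c ν x y 2
      simp only [NLC, Matrix.cons_val_two, Matrix.tail_cons, Matrix.head_cons]
      rw [eq_div_iff hν']
      linear_combination h2 / 2
  have hR : ∀ X Y Z : V3,
      Rc (braC c) nab X Y Z = -(1/ν) • (gE c ν Y Z • X - gE c ν X Z • Y) := by
    intro X Y Z
    funext i
    fin_cases i <;>
      simp only [Fin.isValue, Fin.zero_eta, Fin.mk_one, Rc, hE, NLC, braC, gE,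
        Pi.sub_apply, Pi.smul_apply, smul_eq_mul, Matrix.cons_val_zero,
        Matrix.cons_val_one, Matrix.head_cons, Matrix.cons_val_two,
        Matrix.tail_cons, hfin] <;>
      field_simp <;> ring
  refine ⟨?_, hR⟩
  intro X Y
  simp only [RicF, Fin.sum_univ_three, hR, he0, he1, he2, gE,
    Pi.sub_apply, Pi.smul_apply, smul_eq_mul, Matrix.cons_val_zero,
    Matrix.cons_val_one, Matrix.head_cons, Matrix.cons_val_two, Matrix.tail_cons]
  field_simp
  ring
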